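/- Existence and uniqueness of the mean-field fixed point: if sup_{ψ ∈ [0,1]^V} |F̃(ψ)| < 1/|V|, then there exists a unique ψ* ∈ [0,1]^V with ψ* = σ(∇F̃(ψ*)), and for any starting point ψ^(0) ∈ [0,1]^V, the iterates ψ^(k+1) = σ(∇F̃(ψ^(k))) converge to ψ*. -/

import Mathlib

open Real Finset NNReal

noncomputable def mlext {n : ℕ} (F : Finset (Fin n) → ℝ) (ψ : Fin n → ℝ) : ℝ :=
  ∑ S : Finset (Fin n), F S * ((∏ j ∈ S, ψ j) * ∏ j ∈ Sᶜ, (1 - ψ j))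

noncomputable def pd {n : ℕ} (i : Fin n) (f : (Fin n → ℝ) → ℝ) (ψ : Fin n → ℝ) : ℝ :=
  deriv (fun t => f (Function.update ψ i t)) (ψ i)

noncomputable def sigmoid (x : ℝ) : ℝ := (1 + Real.exp (-x))⁻¹

lemma sigmoid_hasDerivAt (x : ℝ) :
    HasDerivAt _root_.sigmoid (Real.exp (-x) / (1 + Real.exp (-x))^2) x := by
  have hne : (1 + Real.exp (-x)) ≠ 0 := by positivity
  have h1 : HasDerivAt (fun y : ℝ => 1 + Real.exp (-y)) (-Real.exp (-x)) x := by
    have h0 : HasDerivAt (fun y : ℝ => Real.exp (-y)) (-Real.exp (-x)) x := by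
      have := (hasDerivAt_neg x).exp
      convert this using 1; ring
    simpa using h0.const_add 1
  have := h1.inv hne
  rw [show Real.exp (-x) / (1 + Real.exp (-x))^2
      = - -Real.exp (-x) / (1 + Real.exp (-x))^2 by ring]
  exact this

lemma sigmoid_lipschitz : LipschitzWith (1/4 : ℝ≥0) _root_.sigmoid := by
  apply lipschitzWith_of_nnnorm_deriv_le
  · intro x; exact (sigmoid_hasDerivAt x).differentiableAt
  · intro x
    rw [(sigmoid_hasDerivAt x).deriv, ← NNReal.coe_le_coe, coe_nnnorm, Real.norm_eq_abs]
    have he := Real.exp_pos (-x)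
    have hne : (0:ℝ) < (1 + Real.exp (-x))^2 := by positivity
    rw [abs_of_nonneg (by positivity)]
    push_cast
    rw [div_le_iff₀ hne]
    nlinarith [sq_nonneg (1 - Real.exp (-x))]

lemma sigmoid_mem (x : ℝ) : _root_.sigmoid x ∈ Set.Icc (0:ℝ) 1 := by
  have he := Real.exp_pos (-x)
  constructor
  · unfold _root_.sigmoid; positivity
  · exact inv_le_one_of_one_le₀ (by linarith)

lemma sigmoid_dist (a b : ℝ) : |_root_.sigmoid a - _root_.sigmoid b| ≤ (1/4) * |a - b| := by
  have := sigmoid_lipschitz.dist_le_mul a b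
  rw [Real.dist_eq, Real.dist_eq] at this
  simpa using this

lemma mlext_update {n : ℕ} (F : Finset (Fin n) → ℝ) (ψ : Fin n → ℝ) (i : Fin n) (t : ℝ) :
    mlext F (Function.update ψ i t)
      = (1 - t) * mlext F (Function.update ψ i 0) + t * mlext F (Function.update ψ i 1) := by
  unfold mlext
  rw [Finset.mul_sum, Finset.mul_sum, ← Finset.sum_add_distrib]
  refine Finset.sum_congr rfl fun S _ => ?_
  by_cases hi : i ∈ S
  · have hic : i ∉ Sᶜ := by simp [hi]
    have hp : ∀ u : ℝ, (∏ j ∈ S, Function.update ψ i u j) = u * ∏ j ∈ S \ {i}, ψ j :=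
      fun u => Finset.prod_update_of_mem hi ψ u
    have hq : ∀ u : ℝ, (∏ j ∈ Sᶜ, (1 - Function.update ψ i u j)) = ∏ j ∈ Sᶜ, (1 - ψ j) := by
      intro u
      refine Finset.prod_congr rfl fun j hj => ?_
      rw [Function.update_of_ne (by rintro rfl; exact hic hj)]
    rw [hp, hp, hp, hq, hq, hq]; ring
  · have hic : i ∈ Sᶜ := Finset.mem_compl.mpr hi
    have hp : ∀ u : ℝ, (∏ j ∈ S, Function.update ψ i u j) = ∏ j ∈ S, ψ j := by
      intro u
      refine Finset.prod_congr rfl fun j hj => ?_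
      rw [Function.update_of_ne (by rintro rfl; exact hi hj)]
    have hq : ∀ u : ℝ, (∏ j ∈ Sᶜ, (1 - Function.update ψ i u j))
        = (1 - u) * ∏ j ∈ Sᶜ \ {i}, (1 - ψ j) := by
      intro u
      have hcongr : ∀ j ∈ Sᶜ, 1 - Function.update ψ i u j
          = Function.update (fun j => 1 - ψ j) i (1 - u) j := by
        intro j _
        by_cases h : j = i
        · subst h; simp
        · rw [Function.update_of_ne h, Function.update_of_ne h]
      rw [Finset.prod_congr rfl hcongr, Finset.prod_update_of_mem hic]
    rw [hp, hp, hp, hq, hq, hq]; ring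

lemma pd_mlext {n : ℕ} (F : Finset (Fin n) → ℝ) (ψ : Fin n → ℝ) (i : Fin n) :
    pd i (mlext F) ψ
      = mlext F (Function.update ψ i 1) - mlext F (Function.update ψ i 0) := by
  unfold pd
  set a := mlext F (Function.update ψ i 0) with ha
  set b := mlext F (Function.update ψ i 1) with hb
  have h : (fun t => mlext F (Function.update ψ i t)) = fun t => a + (b - a) * t := by
    funext t; rw [mlext_update]; ring
  rw [h]
  simpa using (((hasDerivAt_id (ψ i)).const_mul (b - a)).const_add a).deriv

lemma update_mem_cube {n : ℕ} {ψ : Fin n → ℝ} (hψ : ∀ k, ψ k ∈ Set.Icc (0:ℝ) 1)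
    (i : Fin n) {c : ℝ} (hc : c ∈ Set.Icc (0:ℝ) 1) :
    ∀ k, Function.update ψ i c k ∈ Set.Icc (0:ℝ) 1 := by
  intro k
  by_cases h : k = i
  · subst h; simpa using hc
  · rw [Function.update_of_ne h]; exact hψ k

lemma mlext_lipschitz {n : ℕ} (F : Finset (Fin n) → ℝ) (M : ℝ)
    (hM : ∀ ψ : Fin n → ℝ, (∀ k, ψ k ∈ Set.Icc (0:ℝ) 1) → |mlext F ψ| ≤ M)
    (ψ φ : Fin n → ℝ) (hψ : ∀ k, ψ k ∈ Set.Icc (0:ℝ) 1) (hφ : ∀ k, φ k ∈ Set.Icc (0:ℝ) 1) :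
    |mlext F φ - mlext F ψ| ≤ 2 * M * ∑ j, |φ j - ψ j| := by
  classical
  set mix : Finset (Fin n) → (Fin n → ℝ) := fun s j => if j ∈ s then φ j else ψ j with hmix
  have hmixcube : ∀ s, ∀ k, mix s k ∈ Set.Icc (0:ℝ) 1 := by
    intro s k; simp only [hmix]; split <;> [exact hφ k; exact hψ k]
  have key1 : ∀ (x : Fin n → ℝ), (∀ k, x k ∈ Set.Icc (0:ℝ) 1) → ∀ (a : Fin n) (u v : ℝ),
      |mlext F (Function.update x a u) - mlext F (Function.update x a v)| ≤ 2 * M * |u - v| := by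
    intro x hx a u v
    rw [mlext_update F x a u, mlext_update F x a v]
    have hA := hM _ (update_mem_cube hx a (by norm_num : (0:ℝ) ∈ Set.Icc (0:ℝ) 1))
    have hB := hM _ (update_mem_cube hx a (by norm_num : (1:ℝ) ∈ Set.Icc (0:ℝ) 1))
    set A := mlext F (Function.update x a 0)
    set B := mlext F (Function.update x a 1)
    have he : (1 - u) * A + u * B - ((1 - v) * A + v * B) = (u - v) * (B - A) := by ring
    rw [he, abs_mul]
    have h3 : |B - A| ≤ |B| + |A| := by simpa [sub_eq_add_neg] using abs_add_le B (-A)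
    have h4 : |B - A| ≤ 2 * M := by linarith
    calc |u - v| * |B - A| ≤ |u - v| * (2 * M) :=
          mul_le_mul_of_nonneg_left h4 (abs_nonneg _)
      _ = 2 * M * |u - v| := by ring
  have key : ∀ s : Finset (Fin n),
      |mlext F (mix s) - mlext F ψ| ≤ 2 * M * ∑ j ∈ s, |φ j - ψ j| := by
    intro s
    induction s using Finset.induction_on with
    | empty =>
      have : mix ∅ = ψ := by funext j; simp [hmix]
      simp [this]
    | @insert a s ha IH =>
      have h1 : mix (insert a s) = Function.update (mix s) a (φ a) := by
        funext j
        by_cases h : j = a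
        · subst h; simp [hmix]
        · simp [hmix, Function.update_of_ne h, h]
      have h2 : mix s = Function.update (mix s) a (ψ a) := by
        funext j
        by_cases h : j = a
        · subst h; simp [hmix, ha]
        · simp [Function.update_of_ne h]
      have hstep : |mlext F (mix (insert a s)) - mlext F (mix s)| ≤ 2 * M * |φ a - ψ a| := by
        have hk := key1 (mix s) (hmixcube s) a (φ a) (ψ a)
        rw [← h2] at hk
        rw [h1]
        exact hk
      calc |mlext F (mix (insert a s)) - mlext F ψ|
          ≤ |mlext F (mix (insert a s)) - mlext F (mix s)| + |mlext F (mix s) - mlext F ψ| := by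
            have := abs_sub_le (mlext F (mix (insert a s))) (mlext F (mix s)) (mlext F ψ)
            linarith
        _ ≤ 2 * M * |φ a - ψ a| + 2 * M * ∑ j ∈ s, |φ j - ψ j| := add_le_add hstep IH
        _ = 2 * M * ∑ j ∈ insert a s, |φ j - ψ j| := by rw [Finset.sum_insert ha]; ring
  have huniv : mix Finset.univ = φ := by funext j; simp [hmix]
  have := key Finset.univ
  rwa [huniv] at this

theorem mean_field_fixed_point_exists_unique {n : ℕ} (hn : 1 ≤ n)
    (F : Finset (Fin n) → ℝ)
    (hsup : sSup ((fun φ => |mlext F φ|) '' {φ : Fin n → ℝ | ∀ k, φ k ∈ Set.Icc (0:ℝ) 1})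
      < 1 / n) :
    ∃ ψs : Fin n → ℝ,
      ((∀ k, ψs k ∈ Set.Icc (0:ℝ) 1) ∧ (∀ i, ψs i = _root_.sigmoid (pd i (mlext F) ψs))) ∧
      (∀ φ : Fin n → ℝ, (∀ k, φ k ∈ Set.Icc (0:ℝ) 1) →
        (∀ i, φ i = _root_.sigmoid (pd i (mlext F) φ)) → φ = ψs) ∧
      (∀ ψ0 : Fin n → ℝ, (∀ k, ψ0 k ∈ Set.Icc (0:ℝ) 1) →
        Filter.Tendsto
          (fun k => (fun φ i => _root_.sigmoid (pd i (mlext F) φ))^[k] ψ0)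
          Filter.atTop (nhds ψs)) := by
  classical
  set cube : Set (Fin n → ℝ) := {φ : Fin n → ℝ | ∀ k, φ k ∈ Set.Icc (0:ℝ) 1} with hcube
  set M : ℝ := sSup ((fun φ => |mlext F φ|) '' cube) with hMdef
  -- M is an upper bound for |mlext F| on the cube
  have hbdd : BddAbove ((fun φ => |mlext F φ|) '' cube) := by
    refine ⟨∑ S : Finset (Fin n), |F S|, ?_⟩
    rintro y ⟨ψ, hψ, rfl⟩
    calc |mlext F ψ| ≤ ∑ S : Finset (Fin n), |F S * ((∏ j ∈ S, ψ j) * ∏ j ∈ Sᶜ, (1 - ψ j))| :=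
          Finset.abs_sum_le_sum_abs _ _
      _ ≤ ∑ S : Finset (Fin n), |F S| := by
        refine Finset.sum_le_sum fun S _ => ?_
        rw [abs_mul]
        have h1 : (0:ℝ) ≤ ∏ j ∈ S, ψ j := Finset.prod_nonneg fun j _ => (hψ j).1
        have h2 : (0:ℝ) ≤ ∏ j ∈ Sᶜ, (1 - ψ j) :=
          Finset.prod_nonneg fun j _ => by linarith [(hψ j).2]
        have h3 : (∏ j ∈ S, ψ j) ≤ 1 :=
          Finset.prod_le_one (fun j _ => (hψ j).1) (fun j _ => (hψ j).2)
        have h4 : (∏ j ∈ Sᶜ, (1 - ψ j)) ≤ 1 :=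
          Finset.prod_le_one (fun j _ => by linarith [(hψ j).2]) (fun j _ => by
            linarith [(hψ j).1])
        have h5 : |(∏ j ∈ S, ψ j) * ∏ j ∈ Sᶜ, (1 - ψ j)| ≤ 1 := by
          rw [abs_of_nonneg (mul_nonneg h1 h2)]
          calc (∏ j ∈ S, ψ j) * ∏ j ∈ Sᶜ, (1 - ψ j) ≤ 1 * 1 :=
                mul_le_mul h3 h4 h2 zero_le_one
            _ = 1 := by ring
        calc |F S| * |(∏ j ∈ S, ψ j) * ∏ j ∈ Sᶜ, (1 - ψ j)| ≤ |F S| * 1 :=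
              mul_le_mul_of_nonneg_left h5 (abs_nonneg _)
          _ = |F S| := by ring
  have hM : ∀ ψ : Fin n → ℝ, (∀ k, ψ k ∈ Set.Icc (0:ℝ) 1) → |mlext F ψ| ≤ M :=
    fun ψ hψ => le_csSup hbdd ⟨ψ, hψ, rfl⟩
  have hM0 : 0 ≤ M := le_trans (abs_nonneg _) (hM (fun _ => 0) (fun _ => by norm_num))
  have hnpos : (0:ℝ) < n := by exact_mod_cast hn
  have hMn : M * n < 1 := by
    have : M < 1 / n := hsup
    calc M * n < (1 / n) * n := by exact mul_lt_mul_of_pos_right this hnpos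
      _ = 1 := by field_simp
  -- pd is Lipschitz on the cube
  have hpd : ∀ i (ψ φ : Fin n → ℝ), (∀ k, ψ k ∈ Set.Icc (0:ℝ) 1) →
      (∀ k, φ k ∈ Set.Icc (0:ℝ) 1) →
      |pd i (mlext F) φ - pd i (mlext F) ψ| ≤ 4 * M * n * dist φ ψ := by
    intro i ψ φ hψ hφ
    have hsum : ∀ c : ℝ, c ∈ Set.Icc (0:ℝ) 1 →
        |mlext F (Function.update φ i c) - mlext F (Function.update ψ i c)|
          ≤ 2 * M * n * dist φ ψ := by
      intro c hc
      have := mlext_lipschitz F M hM (Function.update ψ i c) (Function.update φ i c)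
        (update_mem_cube hψ i hc) (update_mem_cube hφ i hc)
      have hS : (∑ j, |Function.update φ i c j - Function.update ψ i c j|)
          ≤ (n : ℝ) * dist φ ψ := by
        calc (∑ j, |Function.update φ i c j - Function.update ψ i c j|)
            ≤ ∑ _j : Fin n, dist φ ψ := by
              refine Finset.sum_le_sum fun j _ => ?_
              by_cases h : j = i
              · subst h; simp [dist_nonneg]
              · rw [Function.update_of_ne h, Function.update_of_ne h, ← Real.dist_eq]
                exact dist_le_pi_dist φ ψ j
          _ = (n : ℝ) * dist φ ψ := by simp [mul_comm]
      calc |mlext F (Function.update φ i c) - mlext F (Function.update ψ i c)|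
          ≤ 2 * M * ∑ j, |Function.update φ i c j - Function.update ψ i c j| := this
        _ ≤ 2 * M * ((n : ℝ) * dist φ ψ) := by
            exact mul_le_mul_of_nonneg_left hS (by linarith)
        _ = 2 * M * n * dist φ ψ := by ring
    rw [pd_mlext, pd_mlext]
    have h1 := hsum 1 (by norm_num)
    have h0 := hsum 0 (by norm_num)
    set a1 := mlext F (Function.update φ i 1)
    set b1 := mlext F (Function.update ψ i 1)
    set a0 := mlext F (Function.update φ i 0)
    set b0 := mlext F (Function.update ψ i 0)
    have : |a1 - a0 - (b1 - b0)| ≤ |a1 - b1| + |a0 - b0| := by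
      have := abs_add_le (a1 - b1) (-(a0 - b0))
      have he : a1 - a0 - (b1 - b0) = (a1 - b1) + -(a0 - b0) := by ring
      rw [he]
      simpa [abs_sub_comm] using this
    linarith
  -- the cube as a complete nonempty metric space
  have hclosed : IsClosed cube := by
    have : cube = ⋂ k, (fun φ : Fin n → ℝ => φ k) ⁻¹' Set.Icc 0 1 := by
      ext φ; simp [hcube]
    rw [this]
    exact isClosed_iInter fun k => isClosed_Icc.preimage (continuous_apply k)
  haveI := hclosed.completeSpace_coe
  haveI : Nonempty cube := ⟨⟨fun _ => 0, fun _ => by norm_num⟩⟩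
  -- the map
  set T : cube → cube := fun ψ =>
    ⟨fun i => _root_.sigmoid (pd i (mlext F) ψ.1), fun i => sigmoid_mem _⟩ with hT
  have hMn0 : 0 ≤ M * n := by positivity
  set K : ℝ≥0 := ⟨M * n, hMn0⟩ with hK
  have hc : ContractingWith K T := by
    constructor
    · rw [← NNReal.coe_lt_one]; exact hMn
    · refine LipschitzWith.of_dist_le_mul fun x y => ?_
      rw [Subtype.dist_eq]
      have hKd : (K : ℝ) * dist x y = M * n * dist x.1 y.1 := by
        rw [Subtype.dist_eq]; rfl
      rw [hKd]
      refine (dist_pi_le_iff (by positivity)).2 fun i => ?_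
      rw [Real.dist_eq]
      calc |_root_.sigmoid (pd i (mlext F) x.1) - _root_.sigmoid (pd i (mlext F) y.1)|
          ≤ (1/4) * |pd i (mlext F) x.1 - pd i (mlext F) y.1| := sigmoid_dist _ _
        _ ≤ (1/4) * (4 * M * n * dist x.1 y.1) := by
            refine mul_le_mul_of_nonneg_left ?_ (by norm_num)
            exact hpd i y.1 x.1 y.2 x.2
        _ = M * n * dist x.1 y.1 := by ring
  set ψsα : cube := ContractingWith.fixedPoint T hc with hψsα
  have hfix : T ψsα = ψsα := hc.fixedPoint_isFixedPt
  refine ⟨ψsα.1, ⟨ψsα.2, fun i => ?_⟩, fun φ hφc hφf => ?_, fun ψ0 hψ0 => ?_⟩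
  · exact (congrFun (congrArg Subtype.val hfix) i).symm
  · have hfp : Function.IsFixedPt T ⟨φ, hφc⟩ :=
      Subtype.ext (funext fun i => (hφf i).symm)
    exact congrArg Subtype.val (hc.fixedPoint_unique hfp)
  · set g : (Fin n → ℝ) → (Fin n → ℝ) := fun φ i => _root_.sigmoid (pd i (mlext F) φ) with hg
    have hcomm : ∀ (x : cube) (k : ℕ), g^[k] x.1 = (T^[k] x).1 := by
      intro x k
      induction k generalizing x with
      | zero => simp
      | succ k IH =>
        rw [Function.iterate_succ_apply, Function.iterate_succ_apply]
        have : g x.1 = (T x).1 := rfl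
        rw [this]
        exact IH (T x)
    set x1 : cube := ⟨g ψ0, fun i => sigmoid_mem _⟩ with hx1
    have h1 : Filter.Tendsto (fun k => T^[k] x1) Filter.atTop (nhds ψsα) :=
      hc.tendsto_iterate_fixedPoint x1
    have h2 : Filter.Tendsto (fun k => (T^[k] x1).1) Filter.atTop (nhds ψsα.1) :=
      (continuous_subtype_val.tendsto ψsα).comp h1
    have h3 : (fun k => g^[k + 1] ψ0) = fun k => (T^[k] x1).1 := by
      funext k
      rw [Function.iterate_succ_apply]
      exact hcomm x1 k
    rw [← Filter.tendsto_add_atTop_iff_nat 1]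
    show Filter.Tendsto (fun k => g^[k + 1] ψ0) Filter.atTop (nhds ψsα.1)
    rw [h3]
    exact h2
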